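/- If x₀ is T-periodic and b(T) ≠ 1, then the covector v₁(t) := (1/b(t))·(−α(t) f⊥(x₀(t)) + β(t) f(x₀(t))) is a T-periodic function of t: v₁(t + T) = v₁(t) for all t. -/

import Mathlib

open Matrix

noncomputable section

/-- The perpendicular vector field on ℝ²: `(v₁, v₂) ↦ (v₂, −v₁)`. -/
def perp (v : Fin 2 → ℝ) : Fin 2 → ℝ := ![v 1, -v 0]

/-- The Jacobian matrix of `f : ℝ² → ℝ²` at a point `x`: entry `(i, j)` is `∂fᵢ/∂xⱼ (x)`. -/
def jac (f : (Fin 2 → ℝ) → (Fin 2 → ℝ)) (x : Fin 2 → ℝ) : Matrix (Fin 2) (Fin 2) ℝ :=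
  Matrix.of fun i j => fderiv ℝ f x (Pi.single j 1) i

/-- The divergence of `f : ℝ² → ℝ²`, i.e. the trace of its Jacobian. -/
def divg (f : (Fin 2 → ℝ) → (Fin 2 → ℝ)) (x : Fin 2 → ℝ) : ℝ := (jac f x).trace

/-- Diliberto's function `b(t) = exp(∫₀ᵗ (div f)(x₀ s) ds)`. -/
def bD (f : (Fin 2 → ℝ) → (Fin 2 → ℝ)) (x₀ : ℝ → (Fin 2 → ℝ)) (t : ℝ) : ℝ :=
  Real.exp (∫ s in (0:ℝ)..t, divg f (x₀ s))

/-- Diliberto's function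
`a(t) = ∫₀ᵗ [f(x₀ s)ᵀ (A s + (A s)ᵀ) f⊥(x₀ s) / ‖f(x₀ s)‖⁴] b(s) ds`
(here `‖v‖² = v ⬝ᵥ v` is the square of the euclidean norm). -/
def aD (f : (Fin 2 → ℝ) → (Fin 2 → ℝ)) (x₀ : ℝ → (Fin 2 → ℝ)) (t : ℝ) : ℝ :=
  ∫ s in (0:ℝ)..t,
    (f (x₀ s) ⬝ᵥ ((jac f (x₀ s) + (jac f (x₀ s))ᵀ).mulVec (perp (f (x₀ s)))) /
      (f (x₀ s) ⬝ᵥ f (x₀ s)) ^ 2) * bD f x₀ s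

/-- The second Floquet exponent `μ₂ = (1/T) ∫₀ᵀ (div f)(x₀ s) ds`. -/
def mu2D (f : (Fin 2 → ℝ) → (Fin 2 → ℝ)) (x₀ : ℝ → (Fin 2 → ℝ)) (T : ℝ) : ℝ :=
  (1 / T) * ∫ s in (0:ℝ)..T, divg f (x₀ s)

/-- `α(t) = a(T)/(b(T) − 1) + a(t)`. -/
def alphaD (f : (Fin 2 → ℝ) → (Fin 2 → ℝ)) (x₀ : ℝ → (Fin 2 → ℝ)) (T t : ℝ) : ℝ :=
  aD f x₀ T / (bD f x₀ T - 1) + aD f x₀ t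

/-- `β(t) = b(t)/‖f(x₀ t)‖²` (with `‖v‖² = v ⬝ᵥ v`). -/
def betaD (f : (Fin 2 → ℝ) → (Fin 2 → ℝ)) (x₀ : ℝ → (Fin 2 → ℝ)) (t : ℝ) : ℝ :=
  bD f x₀ t / (f (x₀ t) ⬝ᵥ f (x₀ t))

/-- First Floquet eigenvector `u₁(t) = f(x₀ t)`. -/
def u1D (f : (Fin 2 → ℝ) → (Fin 2 → ℝ)) (x₀ : ℝ → (Fin 2 → ℝ)) (t : ℝ) : Fin 2 → ℝ :=
  f (x₀ t)

/-- Second Floquet eigenvector `u₂(t) = e^{−μ₂ t} (α(t) f(x₀ t) + β(t) f⊥(x₀ t))`. -/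
def u2D (f : (Fin 2 → ℝ) → (Fin 2 → ℝ)) (x₀ : ℝ → (Fin 2 → ℝ)) (T t : ℝ) : Fin 2 → ℝ :=
  Real.exp (-(mu2D f x₀ T) * t) •
    (alphaD f x₀ T t • f (x₀ t) + betaD f x₀ t • perp (f (x₀ t)))

/-- First covector `v₁(t) = (1/b(t)) (−α(t) f⊥(x₀ t) + β(t) f(x₀ t))`. -/
def v1D (f : (Fin 2 → ℝ) → (Fin 2 → ℝ)) (x₀ : ℝ → (Fin 2 → ℝ)) (T t : ℝ) : Fin 2 → ℝ :=
  (1 / bD f x₀ t) •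
    ((-(alphaD f x₀ T t)) • perp (f (x₀ t)) + betaD f x₀ t • f (x₀ t))

/-- Second covector `v₂(t) = (e^{μ₂ t}/b(t)) f⊥(x₀ t)`. -/
def v2D (f : (Fin 2 → ℝ) → (Fin 2 → ℝ)) (x₀ : ℝ → (Fin 2 → ℝ)) (T t : ℝ) : Fin 2 → ℝ :=
  (Real.exp (mu2D f x₀ T * t) / bD f x₀ t) • perp (f (x₀ t))

/-- If `x₀` is `T`-periodic and `b(T) ≠ 1`, then the covector
`v₁` is a `T`-periodic function of `t`. -/
theorem v1_periodic
    (f : (Fin 2 → ℝ) → (Fin 2 → ℝ)) (x₀ : ℝ → (Fin 2 → ℝ)) (T : ℝ)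
    (hf : ContDiff ℝ 1 f)
    (hx : ∀ t, HasDerivAt x₀ (f (x₀ t)) t)
    (hfne : ∀ t, f (x₀ t) ≠ 0)
    (hT : 0 < T)
    (hper : ∀ t, x₀ (t + T) = x₀ t)
    (hbT : bD f x₀ T ≠ 1) :
    ∀ t, v1D f x₀ T (t + T) = v1D f x₀ T t := by
  -- continuity facts
  have hcx : Continuous x₀ := continuous_iff_continuousAt.2 fun t => (hx t).continuousAt
  have hcf : Continuous fun s => f (x₀ s) := hf.continuous.comp hcx
  have hcfi : ∀ i : Fin 2, Continuous fun s => f (x₀ s) i := fun i =>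
    (continuous_apply i).comp hcf
  have hcfd : Continuous fun s => fderiv ℝ f (x₀ s) :=
    (hf.continuous_fderiv one_ne_zero).comp hcx
  have hcjac : ∀ i j : Fin 2, Continuous fun s => jac f (x₀ s) i j := by
    intro i j
    simpa [jac, Function.comp_def] using (continuous_apply i).comp (hcfd.clm_apply continuous_const)
  have hcdiv : Continuous fun s => divg f (x₀ s) := by
    simp only [divg, Matrix.trace_fin_two]
    exact (hcjac 0 0).add (hcjac 1 1)
  have hcb : Continuous (bD f x₀) :=
    Real.continuous_exp.comp
      (intervalIntegral.continuous_primitive (fun a b => hcdiv.intervalIntegrable a b) 0)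
  have hden : ∀ s : ℝ, (f (x₀ s) ⬝ᵥ f (x₀ s)) ≠ 0 := fun s h =>
    hfne s (dotProduct_self_eq_zero.mp h)
  set g : ℝ → ℝ := fun s =>
    (f (x₀ s) ⬝ᵥ ((jac f (x₀ s) + (jac f (x₀ s))ᵀ).mulVec (perp (f (x₀ s)))) /
      (f (x₀ s) ⬝ᵥ f (x₀ s)) ^ 2) * bD f x₀ s with hgdef
  have hcnum : Continuous fun s =>
      f (x₀ s) ⬝ᵥ ((jac f (x₀ s) + (jac f (x₀ s))ᵀ).mulVec (perp (f (x₀ s)))) := by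
    simp only [dotProduct, Matrix.mulVec, Fin.sum_univ_two, Matrix.add_apply,
      Matrix.transpose_apply, perp, Matrix.cons_val_zero, Matrix.cons_val_one, Matrix.head_cons]
    exact ((hcfi 0).mul ((((hcjac 0 0).add (hcjac 0 0)).mul (hcfi 1)).add
        (((hcjac 0 1).add (hcjac 1 0)).mul (hcfi 0).neg))).add
      ((hcfi 1).mul ((((hcjac 1 0).add (hcjac 0 1)).mul (hcfi 1)).add
        (((hcjac 1 1).add (hcjac 1 1)).mul (hcfi 0).neg)))
  have hcden : Continuous fun s => f (x₀ s) ⬝ᵥ f (x₀ s) := by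
    simp only [dotProduct, Fin.sum_univ_two]
    exact ((hcfi 0).mul (hcfi 0)).add ((hcfi 1).mul (hcfi 1))
  have hcg : Continuous g :=
    (hcnum.div (hcden.pow 2) fun s => pow_ne_zero 2 (hden s)).mul hcb
  -- periodicity of the divergence along the orbit
  have hdivp : ∀ s, divg f (x₀ (s + T)) = divg f (x₀ s) := fun s => by rw [hper]
  have hintd : ∀ a b : ℝ, IntervalIntegrable (fun s => divg f (x₀ s))
      MeasureTheory.volume a b := fun a b => hcdiv.intervalIntegrable a b
  have keyd : ∀ t : ℝ, (∫ s in (0:ℝ)..(t + T), divg f (x₀ s))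
      = (∫ s in (0:ℝ)..T, divg f (x₀ s)) + ∫ s in (0:ℝ)..t, divg f (x₀ s) := by
    intro t
    rw [← intervalIntegral.integral_add_adjacent_intervals (hintd 0 T) (hintd T (t + T))]
    congr 1
    calc ∫ s in T..(t + T), divg f (x₀ s)
        = ∫ s in (0:ℝ)..t, divg f (x₀ (s + T)) := by
          rw [intervalIntegral.integral_comp_add_right (fun s => divg f (x₀ s)) T, zero_add]
      _ = ∫ s in (0:ℝ)..t, divg f (x₀ s) := by simp only [hdivp]
  have b_shift : ∀ t : ℝ, bD f x₀ (t + T) = bD f x₀ T * bD f x₀ t := by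
    intro t
    simp only [bD, keyd t, Real.exp_add]
  have hbpos : ∀ t : ℝ, 0 < bD f x₀ t := fun t => Real.exp_pos _
  -- the integrand of a scales by b(T) under a period shift
  have hgp : ∀ s : ℝ, g (s + T) = bD f x₀ T * g s := by
    intro s
    simp only [hgdef]
    rw [hper s, b_shift s]
    ring
  have hintg : ∀ a b : ℝ, IntervalIntegrable g MeasureTheory.volume a b := fun a b =>
    hcg.intervalIntegrable a b
  have a_shift : ∀ t : ℝ, aD f x₀ (t + T) = aD f x₀ T + bD f x₀ T * aD f x₀ t := by
    intro t
    have ha : ∀ u : ℝ, aD f x₀ u = ∫ s in (0:ℝ)..u, g s := fun u => rfl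
    rw [ha, ha, ha, ← intervalIntegral.integral_add_adjacent_intervals (hintg 0 T)
      (hintg T (t + T))]
    congr 1
    calc ∫ s in T..(t + T), g s
        = ∫ s in (0:ℝ)..t, g (s + T) := by
          rw [intervalIntegral.integral_comp_add_right g T, zero_add]
      _ = bD f x₀ T * ∫ s in (0:ℝ)..t, g s := by
          simp only [hgp]
          exact intervalIntegral.integral_const_mul _ _
  -- conclusion
  intro t
  have hb1 : bD f x₀ T - 1 ≠ 0 := sub_ne_zero.mpr hbT
  have hc1 : 1 / bD f x₀ (t + T) * (-alphaD f x₀ T (t + T))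
      = 1 / bD f x₀ t * (-alphaD f x₀ T t) := by
    simp only [alphaD, b_shift t, a_shift t]
    field_simp [hb1, (hbpos T).ne', (hbpos t).ne']
    ring
  have hc2 : 1 / bD f x₀ (t + T) * betaD f x₀ (t + T) = 1 / bD f x₀ t * betaD f x₀ t := by
    simp only [betaD, b_shift t, hper t]
    have hXt : bD f x₀ T * bD f x₀ t ≠ 0 := mul_ne_zero (hbpos T).ne' (hbpos t).ne'
    rw [one_div, one_div, inv_mul_eq_div, inv_mul_eq_div, div_div, div_div,
      mul_comm (f (x₀ t) ⬝ᵥ f (x₀ t)) (bD f x₀ T * bD f x₀ t),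
      mul_comm (f (x₀ t) ⬝ᵥ f (x₀ t)) (bD f x₀ t),
      div_mul_cancel_left₀ hXt, div_mul_cancel_left₀ (hbpos t).ne']
  funext i
  simp only [v1D, hper t, Pi.smul_apply, Pi.add_apply, smul_eq_mul, mul_add, ← mul_assoc,
    hc1, hc2]

end
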